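/- Let A ∈ ℂ^{n×n}, u, v ∈ ℂ^n, and τ₁, τ₂ ∈ ℂ with τ₁ ≠ τ₂. Then every common eigenvalue of A + τ₁ u vᵀ and A + τ₂ u vᵀ is an eigenvalue of A, i.e., σ(A + τ₁ u vᵀ) ∩ σ(A + τ₂ u vᵀ) ⊆ σ(A). -/

import Mathlib

lemma aux_det_fact (n : ℕ) (B : Matrix (Fin n) (Fin n) ℂ) (hB : IsUnit B)
    (u v : Fin n → ℂ) (τ : ℂ) (h : ¬ IsUnit (B - τ • Matrix.vecMulVec u v)) :
    τ * (dotProduct (Matrix.vecMul v B⁻¹) u) = 1 := by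
  have hBdet : IsUnit B.det := (Matrix.isUnit_iff_isUnit_det B).mp hB
  have heq : B - τ • Matrix.vecMulVec u v
      = B + Matrix.replicateCol Unit (-τ • u) * Matrix.replicateRow Unit v := by
    rw [← Matrix.vecMulVec_eq]
    ext i j
    simp [Matrix.vecMulVec_apply, mul_assoc]
    ring
  have hdet : (B - τ • Matrix.vecMulVec u v).det = 0 := by
    by_contra hd
    exact h ((Matrix.isUnit_iff_isUnit_det _).mpr (isUnit_iff_ne_zero.mpr hd))
  rw [heq, Matrix.det_add_replicateCol_mul_replicateRow hBdet] at hdet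
  rcases mul_eq_zero.mp hdet with h1 | h2
  · exact absurd h1 hBdet.ne_zero
  · rw [Matrix.det_unique] at h2
    simp only [Matrix.add_apply, Matrix.one_apply_eq, Matrix.mul_apply, Matrix.replicateRow_apply,
      Matrix.replicateCol_apply, Pi.smul_apply, smul_eq_mul, Matrix.vecMul, dotProduct,
      Finset.univ_unique, Finset.sum_singleton, Finset.mul_sum, Finset.sum_mul] at h2 ⊢
    have key : ∑ x, ∑ i, v i * B⁻¹ i x * (-τ * u x)
        = -∑ x, ∑ i, τ * (v i * B⁻¹ i x * u x) := by
      rw [← Finset.sum_neg_distrib]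
      refine Finset.sum_congr rfl fun x _ => ?_
      rw [← Finset.sum_neg_distrib]
      refine Finset.sum_congr rfl fun i _ => ?_
      ring
    rw [key] at h2
    linear_combination -h2


/-- For τ₁ ≠ τ₂, σ(A + τ₁ u vᵀ) ∩ σ(A + τ₂ u vᵀ) ⊆ σ(A). -/
theorem stmt_4 (n : ℕ) (A : Matrix (Fin n) (Fin n) ℂ) (u v : Fin n → ℂ)
    (τ₁ τ₂ : ℂ) (hτ : τ₁ ≠ τ₂) :
    spectrum ℂ (A + τ₁ • Matrix.vecMulVec u v) ∩
        spectrum ℂ (A + τ₂ • Matrix.vecMulVec u v) ⊆ spectrum ℂ A := by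
  rintro μ ⟨h1, h2⟩
  by_contra hA
  rw [spectrum.notMem_iff] at hA
  rw [spectrum.mem_iff] at h1 h2
  set B := algebraMap ℂ (Matrix (Fin n) (Fin n) ℂ) μ - A with hBdef
  have e : ∀ τ : ℂ, algebraMap ℂ (Matrix (Fin n) (Fin n) ℂ) μ - (A + τ • Matrix.vecMulVec u v)
      = B - τ • Matrix.vecMulVec u v := by intro τ; rw [hBdef, sub_add_eq_sub_sub]
  rw [e] at h1 h2
  have c1 := aux_det_fact n B hA u v τ₁ h1
  have c2 := aux_det_fact n B hA u v τ₂ h2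
  have hc : dotProduct (Matrix.vecMul v B⁻¹) u ≠ 0 := by
    intro h; rw [h, mul_zero] at c1; exact one_ne_zero c1.symm
  exact hτ (mul_right_cancel₀ hc (c1.trans c2.symm))
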